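/- For any rack X, the congruence Q_X permutes with any reflexive internal (compatible) relation R on X: Q_X ∘ R = R ∘ Q_X. -/

import Mathlib

/-- A rack: a set with operations `◁`, `◁⁻¹` satisfying (R1) and (R2). -/
class PaperRack (X : Type*) where
  act : X → X → X
  inv : X → X → X
  r1a : ∀ x y, inv (act x y) y = x
  r1b : ∀ x y, act (inv x y) y = x
  r2 : ∀ x y z, act (act x y) z = act (act x z) (act y z)

infixl:70 " ◁ " => PaperRack.act
infixl:70 " ◁⁻¹ " => PaperRack.inv

/-- `y ◁^n y` for a natural number `n`. -/
def selfIterPos {X : Type*} [PaperRack X] (y : X) : ℕ → X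
  | 0 => y
  | n + 1 => selfIterPos y n ◁ selfIterPos y n

/-- `y ◁^k y` for an integer `k` (using `◁⁻¹` when `k < 0`, with `y ◁^0 y = y`). -/
def selfIter {X : Type*} [PaperRack X] (y : X) : ℤ → X
  | Int.ofNat n => selfIterPos y n
  | Int.negSucc n =>
      (fun m => Nat.rec (motive := fun _ => X) (y ◁⁻¹ y)
        (fun _ z => z ◁⁻¹ z) m) n

/-- The congruence `Q_X`: `(x, y) ∈ Q_X` iff `x = y ◁^k y` for some integer `k`. -/
def QX {X : Type*} [PaperRack X] (x y : X) : Prop :=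
  ∃ k : ℤ, x = selfIter y k

section Aux

variable {X : Type*} [PaperRack X]

lemma sigma_act (x y : X) : (x ◁ x) ◁ y = (x ◁ y) ◁ (x ◁ y) :=
  PaperRack.r2 x x y

lemma tau_act (x y : X) : (x ◁⁻¹ x) ◁ y = (x ◁ y) ◁⁻¹ (x ◁ y) := by
  have h := PaperRack.r2 (x ◁⁻¹ x) x y
  rw [PaperRack.r1b] at h
  have := congrArg (fun z => z ◁⁻¹ (x ◁ y)) h
  simpa [PaperRack.r1a] using this.symm

lemma tau_sigma (x : X) : (x ◁ x) ◁⁻¹ (x ◁ x) = x := by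
  have h := tau_act x x
  rw [PaperRack.r1b] at h
  exact h.symm

lemma sigma_tau (x : X) : (x ◁⁻¹ x) ◁ (x ◁⁻¹ x) = x := by
  have h := sigma_act (x ◁⁻¹ x) x
  rw [PaperRack.r1b] at h
  have := congrArg (fun z => z ◁⁻¹ x) h
  simpa [PaperRack.r1a] using this

/-- The self-action `x ↦ x ◁ x` as a permutation. -/
def sigmaPerm (X : Type*) [PaperRack X] : Equiv.Perm X where
  toFun x := x ◁ x
  invFun x := x ◁⁻¹ x
  left_inv := tau_sigma
  right_inv := sigma_tau

lemma selfIter_eq_zpow (y : X) (k : ℤ) : selfIter y k = (sigmaPerm X ^ k) y := by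
  cases k with
  | ofNat n =>
    induction n with
    | zero => simp [selfIter, selfIterPos]
    | succ m ih =>
      show selfIterPos y (m + 1) = _
      have : ((sigmaPerm X : Equiv.Perm X) ^ (Int.ofNat (m+1))) y
          = sigmaPerm X (((sigmaPerm X) ^ (Int.ofNat m)) y) := by
        rw [show (Int.ofNat (m+1)) = 1 + Int.ofNat m by simp [Int.add_comm]]
        rw [zpow_add, zpow_one]
        rfl
      rw [this, ← ih]
      rfl
  | negSucc n =>
    induction n with
    | zero =>
      show y ◁⁻¹ y = _
      have : ((sigmaPerm X : Equiv.Perm X) ^ (Int.negSucc 0)) y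
          = (sigmaPerm X)⁻¹ y := by norm_num
      rw [this]; rfl
    | succ m ih =>
      show (selfIter y (Int.negSucc m)) ◁⁻¹ (selfIter y (Int.negSucc m)) = _
      rw [ih]
      have : ((sigmaPerm X : Equiv.Perm X) ^ (Int.negSucc (m+1))) y
          = (sigmaPerm X)⁻¹ (((sigmaPerm X) ^ (Int.negSucc m)) y) := by
        rw [show (Int.negSucc (m+1)) = (-1) + Int.negSucc m by
          simp [Int.negSucc_eq]]
        rw [zpow_add, zpow_neg_one]
        rfl
      rw [this]
      rfl

lemma selfIter_compat {R : X → X → Prop}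
    (hact : ∀ x y u v, R x y → R u v → R (x ◁ u) (y ◁ v))
    (hinv : ∀ x y u v, R x y → R u v → R (x ◁⁻¹ u) (y ◁⁻¹ v))
    (k : ℤ) {x y : X} (h : R x y) : R (selfIter x k) (selfIter y k) := by
  cases k with
  | ofNat n =>
    induction n with
    | zero => exact h
    | succ m ih => exact hact _ _ _ _ ih ih
  | negSucc n =>
    induction n with
    | zero => exact hinv _ _ _ _ h h
    | succ m ih => exact hinv _ _ _ _ ih ih

end Aux

/-- `Q_X` permutes with every reflexive compatible relation `R` on a rack `X`:
`Q_X ∘ R = R ∘ Q_X` (where `(a,b) ∈ Q_X ∘ R` iff `∃ c, (a,c) ∈ Q_X ∧ (c,b) ∈ R`). -/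
theorem QX_permutes {X : Type*} [PaperRack X] (R : X → X → Prop)
    (hrefl : ∀ x, R x x)
    (hact : ∀ x y u v, R x y → R u v → R (x ◁ u) (y ◁ v))
    (hinv : ∀ x y u v, R x y → R u v → R (x ◁⁻¹ u) (y ◁⁻¹ v)) :
    ∀ a b : X, (∃ c, QX a c ∧ R c b) ↔ (∃ c, R a c ∧ QX c b) := by
  intro a b
  constructor
  · rintro ⟨c, ⟨k, hk⟩, hR⟩
    refine ⟨selfIter b k, ?_, ⟨k, rfl⟩⟩
    rw [hk]
    exact selfIter_compat hact hinv k hR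
  · rintro ⟨c, hR, ⟨k, hk⟩⟩
    refine ⟨selfIter a (-k), ⟨k, ?_⟩, ?_⟩
    · rw [selfIter_eq_zpow, selfIter_eq_zpow]
      rw [← Equiv.Perm.mul_apply, ← zpow_add]
      simp
    · have h := selfIter_compat hact hinv (-k) hR
      have : selfIter c (-k) = b := by
        rw [hk, selfIter_eq_zpow, selfIter_eq_zpow]
        simp [← Equiv.Perm.mul_apply, ← zpow_add]
      rwa [this] at h
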